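/- arXiv:math/0204136 — 7 statements merged into one kernel-verified Lean document; each statement's English description precedes it below -/
import Mathlib

section
/- A function f : (X,𝒯) → (Y,𝒱) between topological spaces is θ-continuous if and only if f(cl_θ(A)) ⊆ cl_θ(f(A)) for every A ⊆ X. -/
open Set

/-- The θ-closure of a set `A` in a topological space: the set of points `x` such that
`closure U` meets `A` for every open neighbourhood `U` of `x`. -/
def thetaCl {X : Type*} [TopologicalSpace X] (A : Set X) : Set X :=
  {x | ∀ U : Set X, IsOpen U → x ∈ U → (closure U ∩ A).Nonempty}

/-- A function between topological spaces is θ-continuous if for every point `x` and every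
open neighbourhood `V` of `f x` there is an open neighbourhood `U` of `x` with
`f '' closure U ⊆ closure V`. -/
def ThetaContinuous {X Y : Type*} [TopologicalSpace X] [TopologicalSpace Y] (f : X → Y) : Prop :=
  ∀ x : X, ∀ V : Set Y, IsOpen V → f x ∈ V →
    ∃ U : Set X, IsOpen U ∧ x ∈ U ∧ f '' closure U ⊆ closure V

/-- A function between topological spaces is θ-continuous iff
`f '' thetaCl A ⊆ thetaCl (f '' A)` for every `A ⊆ X`. -/
theorem thetaContinuous_iff_image_thetaCl_subset {X Y : Type*} [TopologicalSpace X]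
    [TopologicalSpace Y] (f : X → Y) :
    ThetaContinuous f ↔ ∀ A : Set X, f '' thetaCl A ⊆ thetaCl (f '' A) := by
  constructor
  · intro hf A y hy
    obtain ⟨x, hx, rfl⟩ := hy
    intro V hV hfx
    obtain ⟨U, hU, hxU, hUV⟩ := hf x V hV hfx
    obtain ⟨a, haU, haA⟩ := hx U hU hxU
    exact ⟨f a, hUV ⟨a, haU, rfl⟩, ⟨a, haA, rfl⟩⟩
  · intro h x V hV hfx
    by_contra hc
    push_neg at hc
    set A : Set X := f ⁻¹' (closure V)ᶜ with hA
    have hx : x ∈ thetaCl A := by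
      intro U hU hxU
      obtain ⟨y, ⟨a, haU, rfl⟩, hy⟩ := not_subset.1 (hc U hU hxU)
      exact ⟨a, haU, hy⟩
    obtain ⟨y, hyV, a, haA, rfl⟩ := h A ⟨x, hx, rfl⟩ V hV hfx
    exact haA hyV
end

section
/- A function f : (X,𝒯) → (Y,𝒱) between topological spaces is θ-continuous if and only if cl_θ(f⁻¹(B)) ⊆ f⁻¹(cl_θ(B)) for every B ⊆ Y. -/
open Set

/-- A function between topological spaces is θ-continuous iff
`thetaCl (f ⁻¹' B) ⊆ f ⁻¹' (thetaCl B)` for every `B ⊆ Y`. -/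
theorem thetaContinuous_iff_thetaCl_preimage_subset {X Y : Type*} [TopologicalSpace X]
    [TopologicalSpace Y] (f : X → Y) :
    ThetaContinuous f ↔ ∀ B : Set Y, thetaCl (f ⁻¹' B) ⊆ f ⁻¹' (thetaCl B) := by
  constructor
  · intro hf B x hx V hV hxV
    obtain ⟨U, hU, hxU, hsub⟩ := hf x V hV hxV
    obtain ⟨z, hzU, hzB⟩ := hx U hU hxU
    exact ⟨f z, hsub ⟨z, hzU, rfl⟩, hzB⟩
  · intro h x V hV hxV
    by_contra hc
    push_neg at hc
    have hx : x ∈ thetaCl (f ⁻¹' (closure V)ᶜ) := by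
      intro U hU hxU
      obtain ⟨y, ⟨z, hz, rfl⟩, hy⟩ := not_subset.mp (hc U hU hxU)
      exact ⟨z, hz, hy⟩
    obtain ⟨w, hwV, hwB⟩ := h _ hx V hV hxV
    exact hwB hwV
end

section
/- Let X, Y, Z be topological spaces. A function g : Z × X → Y is θ-continuous (with respect to the product topology on Z × X) if and only if g is a continuous map from the product closure space (Z,cl_θ) × (X,cl_θ) to the closure space (Y,cl_θ), i.e., for every S ⊆ Z × X and every (z,x) with the property that (W × U) ∩ S ≠ ∅ whenever W is the closure of an open neighbourhood of z and U is the closure of an open neighbourhood of x, one has g(z,x) ∈ cl_θ(g(S)), and conversely this closure-space continuity implies θ-continuity of g. -/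
open Set

/-- A function `g : Z × X → Y` is θ-continuous (for the product topology) iff it is a
continuous map from the product of the θ-closure spaces of `Z` and `X` to the θ-closure
space of `Y`: for every `S ⊆ Z × X` and every point `(z, x)` such that
`(closure W ×ˢ closure U) ∩ S ≠ ∅` for all open neighbourhoods `W` of `z` and `U` of `x`,
one has `g (z, x) ∈ thetaCl (g '' S)`. -/
theorem thetaContinuous_prod_iff_closureSpace_continuous {X Y Z : Type*} [TopologicalSpace X]
    [TopologicalSpace Y] [TopologicalSpace Z] (g : Z × X → Y) :
    ThetaContinuous g ↔
      ∀ (S : Set (Z × X)) (z : Z) (x : X),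
        (∀ (W : Set Z) (U : Set X), IsOpen W → z ∈ W → IsOpen U → x ∈ U →
          ((closure W ×ˢ closure U) ∩ S).Nonempty) →
        g (z, x) ∈ thetaCl (g '' S) := by
  constructor
  · intro hg S z x hS V hV hgV
    obtain ⟨O, hO, hzxO, hgO⟩ := hg (z, x) V hV hgV
    obtain ⟨W, U, hW, hU, hzW, hxU, hWU⟩ := isOpen_prod_iff.mp hO z x hzxO
    obtain ⟨p, hp1, hp2⟩ := hS W U hW hzW hU hxU
    refine ⟨g p, ?_, p, hp2, rfl⟩
    apply hgO
    refine ⟨p, ?_, rfl⟩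
    have : p ∈ closure (W ×ˢ U) := by
      rw [closure_prod_eq]; exact hp1
    exact closure_mono hWU this
  · intro h z V hV hgV
    by_contra hc
    push_neg at hc
    set S : Set (Z × X) := {p | g p ∉ closure V} with hSdef
    have hS : ∀ (W : Set Z) (U : Set X), IsOpen W → z.1 ∈ W → IsOpen U → z.2 ∈ U →
        ((closure W ×ˢ closure U) ∩ S).Nonempty := by
      intro W U hW hzW hU hxU
      obtain ⟨y, ⟨p, hp, rfl⟩, hyV⟩ := not_subset.mp (hc (W ×ˢ U) (hW.prod hU) ⟨hzW, hxU⟩)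
      rw [closure_prod_eq] at hp
      exact ⟨p, hp, hyV⟩
    have := h S z.1 z.2 hS
    obtain ⟨y, hy1, ⟨p, hp, rfl⟩⟩ := this V hV hgV
    exact hp hy1
end

section
/- Let (X,u) and (Y,v) be closure spaces and let σ be a Čech closure operator on Y^X. Then σ is admissible if and only if the evaluation mapping ε : (Y^X,σ) × (X,u) → (Y,v), ε(f,x) = f(x), is continuous (with respect to the product closure on Y^X × X). -/
open Set

universe u

/-- A Čech closure operator on a type `X`: it satisfies (C1) `cl ∅ = ∅`,
(C2) `A ⊆ cl A` and (C3) `cl (A ∪ B) = cl A ∪ cl B`.  The pair `(X, u)` is a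
(Čech) closure space. -/
structure CechClosure (X : Type u) : Type u where
  cl : Set X → Set X
  cl_empty : cl ∅ = ∅
  subset_cl : ∀ A : Set X, A ⊆ cl A
  cl_union : ∀ A B : Set X, cl (A ∪ B) = cl A ∪ cl B

namespace CechClosure

variable {X Y Z : Type u}

/-- The interior operator of a closure space: `int_u A = X \ u (X \ A)`. -/
def interior (u : CechClosure X) (A : Set X) : Set X := (u.cl Aᶜ)ᶜ

/-- `U` is a neighbourhood of `x` in `(X, u)` if `x ∈ int_u U`. -/
def Nhd (u : CechClosure X) (x : X) (U : Set X) : Prop := x ∈ u.interior U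

theorem interior_subset (u : CechClosure X) (A : Set X) : u.interior A ⊆ A := by
  intro x hx
  by_contra h
  exact hx (u.subset_cl _ h)

theorem interior_inter (u : CechClosure X) (A B : Set X) :
    u.interior (A ∩ B) = u.interior A ∩ u.interior B := by
  unfold interior
  rw [compl_inter, u.cl_union, compl_union]

theorem nhd_univ (u : CechClosure X) (x : X) : u.Nhd x univ := by
  simp [Nhd, interior, u.cl_empty]

theorem nhd_inter (u : CechClosure X) {x : X} {A B : Set X} (hA : u.Nhd x A)
    (hB : u.Nhd x B) : u.Nhd x (A ∩ B) := by
  have h := u.interior_inter A B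
  unfold Nhd at *
  rw [h]
  exact ⟨hA, hB⟩

/-- A function `f : (X, u) → (Y, v)` between closure spaces is continuous if
`f (u A) ⊆ v (f A)` for every `A ⊆ X`. -/
def Continuous (u : CechClosure X) (v : CechClosure Y) (f : X → Y) : Prop :=
  ∀ A : Set X, f '' u.cl A ⊆ v.cl (f '' A)

/-- The product of two closure spaces: `(z, x)` is in the closure of `S` iff every
"rectangle" `W ×ˢ U` of neighbourhoods `W` of `z` and `U` of `x` meets `S`. -/
def prod (w : CechClosure Z) (u : CechClosure X) : CechClosure (Z × X) where
  cl S := {p | ∀ W U, w.Nhd p.1 W → u.Nhd p.2 U → (W ×ˢ U ∩ S).Nonempty}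
  cl_empty := by
    ext p
    simp only [mem_setOf_eq, mem_empty_iff_false, iff_false]
    intro h
    rcases h univ univ (w.nhd_univ _) (u.nhd_univ _) with ⟨q, -, hq⟩
    exact hq
  subset_cl := by
    intro S p hp W U hW hU
    exact ⟨p, ⟨⟨w.interior_subset _ hW, u.interior_subset _ hU⟩, hp⟩⟩
  cl_union := by
    intro S T
    ext p
    simp only [mem_setOf_eq, mem_union]
    constructor
    · intro h
      by_contra hc
      push_neg at hc
      obtain ⟨h1, h2⟩ := hc
      simp only [← Set.not_nonempty_iff_eq_empty] at h1 h2
      obtain ⟨W1, U1, hW1, hU1, hne1⟩ := h1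
      obtain ⟨W2, U2, hW2, hU2, hne2⟩ := h2
      rcases h (W1 ∩ W2) (U1 ∩ U2) (w.nhd_inter hW1 hW2) (u.nhd_inter hU1 hU2) with
        ⟨q, ⟨⟨hq1, hq2⟩, hqST⟩⟩
      rcases hqST with hqS | hqT
      · exact hne1 ⟨q, ⟨⟨hq1.1, hq2.1⟩, hqS⟩⟩
      · exact hne2 ⟨q, ⟨⟨hq1.2, hq2.2⟩, hqT⟩⟩
    · rintro (h | h) W U hW hU
      · rcases h W U hW hU with ⟨q, hq1, hq2⟩
        exact ⟨q, hq1, Or.inl hq2⟩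
      · rcases h W U hW hU with ⟨q, hq1, hq2⟩
        exact ⟨q, hq1, Or.inr hq2⟩

/-- `Y^X`: the type of continuous functions between the closure spaces
`(X, u)` and `(Y, v)`. -/
def ContMap (u : CechClosure X) (v : CechClosure Y) : Type u :=
  {f : X → Y // Continuous u v f}

/-- A closure operator `σ` on `Y^X` is proper (splitting) if for every closure space
`(Z, w)`, continuity of `g : (Z, w) × (X, u) → (Y, v)` implies continuity of
`g* : (Z, w) → (Y^X, σ)`, where `g (z, x) = (g* z) x`. -/
def Proper (u : CechClosure X) (v : CechClosure Y) (σ : CechClosure (ContMap u v)) : Prop :=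
  ∀ (Z : Type u) (w : CechClosure Z) (G : Z → ContMap u v),
    Continuous (w.prod u) v (fun p => (G p.1).1 p.2) → Continuous w σ G

/-- A closure operator `σ` on `Y^X` is admissible (jointly continuous) if for every closure
space `(Z, w)`, continuity of `g* : (Z, w) → (Y^X, σ)` implies continuity of
`g : (Z, w) × (X, u) → (Y, v)`, where `g (z, x) = (g* z) x`. -/
def Admissible (u : CechClosure X) (v : CechClosure Y) (σ : CechClosure (ContMap u v)) : Prop :=
  ∀ (Z : Type u) (w : CechClosure Z) (G : Z → ContMap u v),
    Continuous w σ G → Continuous (w.prod u) v (fun p => (G p.1).1 p.2)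

/-- A topological space regarded as a closure space via its (Kuratowski) closure operator. -/
def ofTop {Z : Type u} (t : TopologicalSpace Z) : CechClosure Z :=
  letI := t
  { cl := fun A => _root_.closure A
    cl_empty := closure_empty
    subset_cl := fun _ => subset_closure
    cl_union := fun _ _ => closure_union }

/-- `le` is the order relation of a directed set: a reflexive and transitive relation on a
nonempty type in which every two elements have an upper bound. -/
structure IsDirectedOrder {Λ : Type*} (le : Λ → Λ → Prop) : Prop where
  refl : ∀ a, le a a
  trans : ∀ a b c, le a b → le b c → le a c
  directed : ∀ a b, ∃ c, le a c ∧ le b c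
  nonempty : Nonempty Λ

/-- Convergence of a net `s : Λ → X` (with order `le` on `Λ`) to a point `x` in a closure
space `(X, u)`: every neighbourhood of `x` contains `s l` residually. -/
def NetConv (u : CechClosure X) {Λ : Type*} (le : Λ → Λ → Prop) (s : Λ → X) (x : X) : Prop :=
  ∀ U : Set X, u.Nhd x U → ∃ l₀, ∀ l, le l₀ l → s l ∈ U

/-- The product order on `Λ × M`. -/
def prodLE {Λ M : Type*} (leΛ : Λ → Λ → Prop) (leM : M → M → Prop) :
    Λ × M → Λ × M → Prop :=
  fun p q => leΛ p.1 q.1 ∧ leM p.2 q.2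

/-- A net `F : Λ → Y^X` converges continuously to `f ∈ Y^X` if for every `x ∈ X` and every
net `s : M → X` converging to `x` in `(X, u)`, the net `(l, m) ↦ (F l) (s m)` (indexed by
`Λ × M` with the product order) converges to `f x` in `(Y, v)`. -/
def ContConv (u : CechClosure X) (v : CechClosure Y) {Λ : Type u} (leΛ : Λ → Λ → Prop)
    (F : Λ → ContMap u v) (f : ContMap u v) : Prop :=
  ∀ (M : Type u) (leM : M → M → Prop), IsDirectedOrder leM →
    ∀ (s : M → X) (x : X), NetConv u leM s x →
      NetConv v (prodLE leΛ leM) (fun p : Λ × M => (F p.1).1 (s p.2)) (f.1 x)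

/-- The upper limit of a net `A : Λ → Set X` of subsets of a closure space `(X, u)`: the set
of points `x` such that for every `l₀` and every neighbourhood `U` of `x` there is `l ≥ l₀`
with `A l ∩ U ≠ ∅`. -/
def UpperLim (u : CechClosure X) {Λ : Type*} (le : Λ → Λ → Prop) (A : Λ → Set X) : Set X :=
  {x | ∀ (l₀ : Λ) (U : Set X), u.Nhd x U → ∃ l, le l₀ l ∧ (A l ∩ U).Nonempty}

/-- `g : M → α` is a subnet of `f : Λ → α`: there is `φ : M → Λ` with `g = f ∘ φ` such that
`φ` is residually above any given index of `Λ`. -/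
def IsSubnet {α : Type*} {Λ M : Type*} (leΛ : Λ → Λ → Prop) (leM : M → M → Prop)
    (f : Λ → α) (g : M → α) : Prop :=
  ∃ φ : M → Λ, (∀ m, g m = f (φ m)) ∧ ∀ l₀, ∃ m₀, ∀ m, leM m₀ m → leΛ l₀ (φ m)

end CechClosure
namespace CechClosure

variable {X Y : Type u}

theorem cl_mono' {Z : Type u} (w : CechClosure Z) {A B : Set Z} (h : A ⊆ B) :
    w.cl A ⊆ w.cl B := by
  have : w.cl B = w.cl A ∪ w.cl B := by
    rw [← w.cl_union, union_eq_self_of_subset_left h]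
  rw [this]; exact subset_union_left

theorem continuous_pt {Z W : Type u} {wz : CechClosure Z} {ww : CechClosure W}
    {f : Z → W} (hf : Continuous wz ww f) {A : Set Z} {z : Z} (hz : z ∈ wz.cl A) :
    f z ∈ ww.cl (f '' A) :=
  hf A ⟨z, hz, rfl⟩

theorem nhd_preimage {Z W : Type u} {wz : CechClosure Z} {ww : CechClosure W}
    {f : Z → W} (hf : Continuous wz ww f) {z : Z} {U : Set W} (hU : ww.Nhd (f z) U) :
    wz.Nhd z (f ⁻¹' U) := by
  intro hz
  have h1 : f z ∈ ww.cl (f '' (f ⁻¹' U)ᶜ) := continuous_pt hf hz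
  have h2 : f '' (f ⁻¹' U)ᶜ ⊆ Uᶜ := by
    rintro y ⟨x, hx, rfl⟩; exact hx
  exact hU (cl_mono' ww h2 h1)

theorem continuous_comp {Z W V : Type u} {wz : CechClosure Z} {ww : CechClosure W}
    {wv : CechClosure V} {f : Z → W} {g : W → V} (hf : Continuous wz ww f)
    (hg : Continuous ww wv g) : Continuous wz wv (g ∘ f) := by
  intro A
  rw [image_comp]
  refine (image_mono (f := g) (hf A)).trans ?_
  refine (hg (f '' A)).trans ?_
  rw [image_comp]

theorem continuous_prodMap {Z W T : Type u} {wz : CechClosure Z} {ww : CechClosure W}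
    (wt : CechClosure T) {f : Z → W} (hf : Continuous wz ww f) :
    Continuous (wz.prod wt) (ww.prod wt) (fun p : Z × T => (f p.1, p.2)) := by
  rintro S _ ⟨⟨z, t⟩, hp, rfl⟩ W U hW hU
  rcases hp (f ⁻¹' W) U (nhd_preimage hf hW) hU with ⟨⟨z', t'⟩, ⟨hz', ht'⟩, hS⟩
  exact ⟨(f z', t'), ⟨hz', ht'⟩, ⟨(z', t'), hS, rfl⟩⟩

/-- A closure operator `σ` on `Y^X` is admissible iff the evaluation mapping
`ε : (Y^X, σ) × (X, u) → (Y, v)`, `ε (f, x) = f x`, is continuous (with respect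
to the product closure on `Y^X × X`). -/
theorem admissible_iff_eval_continuous (u : CechClosure X) (v : CechClosure Y)
    (σ : CechClosure (ContMap u v)) :
    Admissible u v σ ↔
      Continuous (σ.prod u) v (fun p : ContMap u v × X => p.1.1 p.2) := by
  constructor
  · intro h
    have := h (ContMap u v) σ id (by intro A; simp)
    simpa using this
  · intro h Z w G hG
    have := continuous_comp (continuous_prodMap u hG) h
    exact this

end CechClosure
end

section
/- Let (X,u) and (Y,v) be closure spaces and (f_λ)_{λ∈Λ} a net in Y^X. The net (f_λ) converges continuously to f ∈ Y^X if and only if for every x ∈ X and every neighbourhood V of f(x) there is a neighbourhood U of x and a λ₀ ∈ Λ such that f_λ(U) ⊆ V for all λ ≥ λ₀. -/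
open Set

universe u

namespace CechClosure

variable {X Y : Type u}

/-- A net `(f_λ)` in `Y^X` converges continuously to `f ∈ Y^X` iff for every `x ∈ X` and
every neighbourhood `V` of `f x` there are a neighbourhood `U` of `x` and an index `l₀`
such that `f_l '' U ⊆ V` for all `l ≥ l₀`. -/
theorem contConv_iff_nhd (u : CechClosure X) (v : CechClosure Y) {Λ : Type u}
    (leΛ : Λ → Λ → Prop) (hΛ : IsDirectedOrder leΛ) (F : Λ → ContMap u v)
    (f : ContMap u v) :
    ContConv u v leΛ F f ↔
      ∀ (x : X) (V : Set Y), v.Nhd (f.1 x) V →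
        ∃ (U : Set X) (l₀ : Λ), u.Nhd x U ∧ ∀ l, leΛ l₀ l → (F l).1 '' U ⊆ V := by
  constructor
  · intro hc x V hV
    by_contra hcon
    push_neg at hcon
    -- for every nhd U and every l₀ there is l ≥ l₀ and y ∈ U with F l y ∉ V
    have key : ∀ (U : Set X) (l₀ : Λ), u.Nhd x U →
        ∃ l, leΛ l₀ l ∧ ∃ y ∈ U, (F l).1 y ∉ V := by
      intro U l₀ hU
      rcases hcon U l₀ hU with ⟨l, hll, hnot⟩
      rw [Set.not_subset] at hnot
      rcases hnot with ⟨z, hz, hzV⟩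
      rcases hz with ⟨y, hyU, rfl⟩
      exact ⟨l, hll, y, hyU, hzV⟩
    -- index set
    let M := {p : Set X × Λ // u.Nhd x p.1}
    let leM : M → M → Prop := fun p q => q.1.1 ⊆ p.1.1 ∧ leΛ p.1.2 q.1.2
    obtain ⟨l⟩ := hΛ.nonempty
    have hM : IsDirectedOrder leM := by
      refine ⟨fun a => ⟨subset_rfl, hΛ.refl _⟩,
        fun a b c hab hbc => ⟨hbc.1.trans hab.1, hΛ.trans _ _ _ hab.2 hbc.2⟩,
        fun a b => ?_, ⟨⟨(univ, l), u.nhd_univ x⟩⟩⟩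
      rcases hΛ.directed a.1.2 b.1.2 with ⟨c, hc1, hc2⟩
      exact ⟨⟨(a.1.1 ∩ b.1.1, c), u.nhd_inter a.2 b.2⟩,
        ⟨inter_subset_left, hc1⟩, ⟨inter_subset_right, hc2⟩⟩
    choose l' hl' y hy hyV using fun (m : M) => key m.1.1 m.1.2 m.2
    have hs : NetConv u leM y x := by
      intro W hW
      refine ⟨⟨(W, l), hW⟩, fun m hm => hm.1 (hy m)⟩
    rcases hc M leM hM y x hs V hV with ⟨⟨l₀, m₀⟩, h⟩
    rcases hΛ.directed l₀ m₀.1.2 with ⟨c, hc1, hc2⟩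
    set m : M := ⟨(m₀.1.1, c), m₀.2⟩
    have hmm : leM m₀ m := ⟨subset_rfl, hc2⟩
    have : (F (l' m)).1 (y m) ∈ V :=
      h (l' m, m) ⟨hΛ.trans _ _ _ hc1 (hl' m), hmm⟩
    exact hyV m this
  · intro h M leM hM s x hs V hV
    rcases h x V hV with ⟨U, l₀, hU, hsub⟩
    rcases hs U hU with ⟨m₀, hm₀⟩
    obtain ⟨l⟩ := hΛ.nonempty
    exact ⟨(l₀, m₀), fun p hp => hsub p.1 hp.1 ⟨s p.2, hm₀ p.2 hp.2, rfl⟩⟩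

end CechClosure
end

section
/- Let (X,u) and (Y,v) be closure spaces and (f_λ)_{λ∈Λ} a net in Y^X. The net (f_λ) converges continuously to f ∈ Y^X if and only if limsup_Λ f_λ⁻¹(B) ⊆ f⁻¹(v(B)) for every subset B of Y. -/
open Set

universe u

namespace CechClosure

variable {X Y : Type u}

/-- A net `(f_λ)` in `Y^X` converges continuously to `f ∈ Y^X` iff
`limsup_Λ f_λ⁻¹(B) ⊆ f⁻¹(v B)` for every subset `B` of `Y`. -/
theorem contConv_iff_upperLim (u : CechClosure X) (v : CechClosure Y) {Λ : Type u}
    (leΛ : Λ → Λ → Prop) (hΛ : IsDirectedOrder leΛ) (F : Λ → ContMap u v)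
    (f : ContMap u v) :
    ContConv u v leΛ F f ↔
      ∀ B : Set Y, UpperLim u leΛ (fun l => (F l).1 ⁻¹' B) ⊆ f.1 ⁻¹' (v.cl B) := by
  constructor
  · intro h B x hx
    by_contra hfx
    have hV : v.Nhd (f.1 x) Bᶜ := by
      simpa [Nhd, interior, compl_compl] using hfx
    -- index set of neighbourhoods of x paired with Λ
    obtain ⟨la⟩ := hΛ.nonempty
    let M : Type u := Λ × {U : Set X // u.Nhd x U}
    let leM : M → M → Prop := fun m m' => leΛ m.1 m'.1 ∧ m'.2.1 ⊆ m.2.1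
    have hM : IsDirectedOrder leM := by
      refine ⟨fun a => ⟨hΛ.refl _, subset_rfl⟩,
        fun a b c hab hbc => ⟨hΛ.trans _ _ _ hab.1 hbc.1, hbc.2.trans hab.2⟩,
        fun a b => ?_, ⟨⟨la, ⟨univ, u.nhd_univ x⟩⟩⟩⟩
      obtain ⟨c, hc1, hc2⟩ := hΛ.directed a.1 b.1
      exact ⟨⟨c, ⟨a.2.1 ∩ b.2.1, u.nhd_inter a.2.2 b.2.2⟩⟩,
        ⟨hc1, inter_subset_left⟩, ⟨hc2, inter_subset_right⟩⟩
    have hsel : ∀ m : M, ∃ l, leΛ m.1 l ∧ ∃ y, (F l).1 y ∈ B ∧ y ∈ m.2.1 := by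
      intro m
      obtain ⟨l, hl, y, hy1, hy2⟩ := hx m.1 m.2.1 m.2.2
      exact ⟨l, hl, y, hy1, hy2⟩
    choose φ hφ s hsB hsU using hsel
    have hconv : NetConv u leM s x := by
      intro U hU
      exact ⟨⟨la, ⟨U, hU⟩⟩, fun m hm => hm.2 (hsU m)⟩
    obtain ⟨p₀, hp₀⟩ := h M leM hM s x hconv Bᶜ hV
    obtain ⟨c, hc1, hc2⟩ := hΛ.directed p₀.1 p₀.2.1
    set m : M := ⟨c, p₀.2.2⟩ with hm
    have hle : prodLE leΛ leM p₀ (φ m, m) :=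
      ⟨hΛ.trans _ _ _ hc1 (hφ m), ⟨hc2, subset_rfl⟩⟩
    exact hp₀ (φ m, m) hle (hsB m)
  · intro h M leM hM s x hs U hU
    have hnot : x ∉ UpperLim u leΛ (fun l => (F l).1 ⁻¹' Uᶜ) := fun hc => hU (h Uᶜ hc)
    simp only [UpperLim, mem_setOf_eq, not_forall, not_exists] at hnot
    obtain ⟨l₀, W, hW, hWl⟩ := hnot
    obtain ⟨m₀, hm₀⟩ := hs W hW
    refine ⟨(l₀, m₀), fun p hp => ?_⟩
    by_contra hcon
    exact (hWl p.1) ⟨hp.1, ⟨s p.2, hcon, hm₀ p.2 hp.2⟩⟩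

end CechClosure
end

section
/- Let (X,u) be a closure space, Y a topological space (regarded as a closure space via its Kuratowski closure), and (f_λ)_{λ∈Λ} a net in Y^X. The net (f_λ) converges continuously to f ∈ Y^X if and only if limsup_Λ f_λ⁻¹(B) ⊆ f⁻¹(B) for every closed subset B of Y. -/
open Set

universe u

namespace CechClosure

variable {X Y : Type u}

/-- Let `(X, u)` be a closure space and `Y` a topological space (regarded as a closure
space via its Kuratowski closure).  A net `(f_λ)` in `Y^X` converges continuously to
`f ∈ Y^X` iff `limsup_Λ f_λ⁻¹(B) ⊆ f⁻¹(B)` for every closed subset `B` of `Y`. -/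
theorem contConv_iff_upperLim_closed (u : CechClosure X) [tY : TopologicalSpace Y]
    {Λ : Type u} (leΛ : Λ → Λ → Prop) (hΛ : IsDirectedOrder leΛ)
    (F : Λ → ContMap u (ofTop tY)) (f : ContMap u (ofTop tY)) :
    ContConv u (ofTop tY) leΛ F f ↔
      ∀ B : Set Y, IsClosed B →
        UpperLim u leΛ (fun l => (F l).1 ⁻¹' B) ⊆ f.1 ⁻¹' B := by
  constructor
  · intro hc B hB x hx
    by_contra hfx
    have hnhd : (ofTop tY).Nhd (f.1 x) Bᶜ := by
      show f.1 x ∈ (closure Bᶜᶜ)ᶜ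
      rw [compl_compl, hB.closure_eq]
      exact hfx
    let M := Λ × {U : Set X // u.Nhd x U}
    let leM : M → M → Prop := fun p q => leΛ p.1 q.1 ∧ q.2.1 ⊆ p.2.1
    have hM : IsDirectedOrder leM := by
      refine ⟨fun a => ⟨hΛ.refl _, subset_rfl⟩,
        fun a b c hab hbc => ⟨hΛ.trans _ _ _ hab.1 hbc.1, hbc.2.trans hab.2⟩, ?_, ?_⟩
      · rintro ⟨a, U, hU⟩ ⟨b, V, hV⟩
        obtain ⟨c, hac, hbc⟩ := hΛ.directed a b
        exact ⟨⟨c, ⟨U ∩ V, u.nhd_inter hU hV⟩⟩, ⟨hac, inter_subset_left⟩,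
          ⟨hbc, inter_subset_right⟩⟩
      · obtain ⟨a⟩ := hΛ.nonempty
        exact ⟨⟨a, ⟨univ, u.nhd_univ x⟩⟩⟩
    have hsel : ∀ m : M, ∃ l, leΛ m.1 l ∧ ∃ z, z ∈ (F l).1 ⁻¹' B ∩ m.2.1 := by
      intro m
      obtain ⟨l, hl, z, hz⟩ := hx m.1 m.2.1 m.2.2
      exact ⟨l, hl, z, hz⟩
    choose lf hlf s hs using hsel
    have hconv : NetConv u leM s x := by
      intro U hU
      obtain ⟨a⟩ := hΛ.nonempty
      exact ⟨(a, ⟨U, hU⟩), fun m hm => hm.2 (hs m).2⟩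
    obtain ⟨⟨l₀, m₀⟩, hp⟩ := hc M leM hM s x hconv Bᶜ hnhd
    obtain ⟨c, hc1, hc2⟩ := hΛ.directed l₀ m₀.1
    have hle : prodLE leΛ leM (l₀, m₀) (lf (c, m₀.2), (c, m₀.2)) :=
      ⟨hΛ.trans _ _ _ hc1 (hlf (c, m₀.2)), ⟨hc2, subset_rfl⟩⟩
    exact hp _ hle (hs (c, m₀.2)).1
  · intro h M leM hM s x hsx V hV
    by_contra hcon
    push_neg at hcon
    have hV' : f.1 x ∉ closure Vᶜ := hV
    apply hV'
    refine h (closure Vᶜ) isClosed_closure ?_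
    intro l₀ U hU
    obtain ⟨m₀, hm₀⟩ := hsx U hU
    obtain ⟨⟨l, m⟩, ⟨hl, hm⟩, hne⟩ := hcon (l₀, m₀)
    exact ⟨l, hl, ⟨s m, subset_closure hne, hm₀ m hm⟩⟩

end CechClosure
end
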